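/- Let 0 < α < 1 and 0 < γ < ξ. Then ∫₀^γ (ξ − η)^{−α−1} (γ − η)^{−α} dη ≤ B(2α, 1−α) · (ξ − γ)^{−2α}, where B(2α, 1−α) := ∫₀^∞ x^{−α} (1 + x)^{−1−α} dx (a finite quantity). -/

import Mathlib

open MeasureTheory Set

theorem aux_cov (γ c : ℝ) (hc : c ≠ 0) (F : ℝ → ENNReal) (hF : Measurable F) :
    ∫⁻ η, F η = ENNReal.ofReal |c| * ∫⁻ x, F (γ - c * x) := by
  have hφ : (fun x : ℝ => γ - c * x) = (fun y => γ + y) ∘ (fun x => -c * x) := by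
    funext x; simp [Function.comp]; ring
  have hmap : Measure.map (fun x : ℝ => γ - c * x) volume
      = ENNReal.ofReal |c|⁻¹ • volume := by
    rw [hφ, ← Measure.map_map (measurable_const_add γ) (measurable_const_mul (-c)),
      Real.map_volume_mul_left (neg_ne_zero.2 hc), Measure.map_smul,
      map_add_left_eq_self, abs_inv, abs_neg]
  have h1 : ∫⁻ x, F (γ - c * x) = ENNReal.ofReal |c|⁻¹ * ∫⁻ η, F η := by
    rw [← lintegral_map hF (by fun_prop), hmap, lintegral_smul_measure, smul_eq_mul]
  rw [h1, ← mul_assoc, ← ENNReal.ofReal_mul (abs_nonneg c),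
    mul_inv_cancel₀ (abs_ne_zero.2 hc), ENNReal.ofReal_one, one_mul]

/-- the beta-type kernel estimate
`∫₀^γ (ξ − η)^{−α−1} (γ − η)^{−α} dη ≤ B(2α, 1−α) (ξ − γ)^{−2α}`. -/
theorem stmt_1 (α γ ξ : ℝ) (hα : 0 < α) (hα1 : α < 1) (hγ : 0 < γ) (hγξ : γ < ξ) :
    (∫⁻ η in Ioo (0:ℝ) γ, ENNReal.ofReal ((ξ - η) ^ (-α - 1) * (γ - η) ^ (-α))) ≤
      (∫⁻ x in Ioi (0:ℝ), ENNReal.ofReal (x ^ (-α) * (1 + x) ^ (-1 - α))) *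
        ENNReal.ofReal ((ξ - γ) ^ (-(2 * α))) := by
  set c := ξ - γ with hcdef
  have hc : 0 < c := sub_pos.2 hγξ
  set g : ℝ → ENNReal := fun η => ENNReal.ofReal ((ξ - η) ^ (-α - 1) * (γ - η) ^ (-α)) with hg
  have hgm : Measurable g := by
    apply Measurable.ennreal_ofReal
    fun_prop
  have hFm : Measurable ((Ioo (0:ℝ) γ).indicator g) :=
    hgm.indicator measurableSet_Ioo
  have key := aux_cov γ c hc.ne' _ hFm
  rw [lintegral_indicator measurableSet_Ioo _, abs_of_pos hc] at key
  rw [key]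
  -- rewrite the indicator composed with the substitution
  have hind : ∀ x : ℝ, (Ioo (0:ℝ) γ).indicator g (γ - c * x)
      = (Ioo (0:ℝ) (γ / c)).indicator
          (fun x => ENNReal.ofReal (c ^ (-2*α - 1)) *
            ENNReal.ofReal (x ^ (-α) * (1 + x) ^ (-1 - α))) x := by
    intro x
    by_cases hx : x ∈ Ioo (0:ℝ) (γ / c)
    · obtain ⟨hx0, hx1⟩ := hx
      have hmem : γ - c * x ∈ Ioo (0:ℝ) γ := by
        constructor
        · have : c * x < γ := (lt_div_iff₀' hc).1 hx1
          linarith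
        · nlinarith
      rw [indicator_of_mem hmem, indicator_of_mem (show x ∈ Ioo (0:ℝ) (γ/c) from ⟨hx0, hx1⟩)]
      have h1 : ξ - (γ - c * x) = c * (1 + x) := by ring
      have h2 : γ - (γ - c * x) = c * x := by ring
      rw [hg]
      simp only [h1, h2]
      rw [Real.mul_rpow hc.le (by linarith), Real.mul_rpow hc.le hx0.le,
        ← ENNReal.ofReal_mul (by positivity)]
      congr 1
      rw [show (-2*α-1 : ℝ) = (-α-1) + (-α) by ring, Real.rpow_add hc,
        show (-1-α:ℝ) = (-α-1) by ring]
      ring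
    · have hnmem : γ - c * x ∉ Ioo (0:ℝ) γ := by
        intro hm
        rw [mem_Ioo] at hm
        obtain ⟨h1, h2⟩ := hm
        apply hx
        constructor
        · nlinarith
        · rw [lt_div_iff₀' hc]; nlinarith
      rw [indicator_of_notMem hnmem, indicator_of_notMem hx]
  simp_rw [hind]
  rw [lintegral_indicator measurableSet_Ioo _,
    lintegral_const_mul' _ _ ENNReal.ofReal_ne_top, ← mul_assoc,
    ← ENNReal.ofReal_mul hc.le]
  have hpow : c * c ^ (-2*α - 1) = c ^ (-(2*α)) := by
    rw [show c * c ^ (-2*α-1) = c ^ (1:ℝ) * c ^ (-2*α-1) by rw [Real.rpow_one],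
      ← Real.rpow_add hc]
    ring_nf
  rw [hpow, mul_comm]
  exact mul_le_mul_left (lintegral_mono_set Ioo_subset_Ioi_self) _
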